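/- Let L be a Lie algebra over ℚ and (K, E) a completion of L. If L is nilpotent of class c, then K is nilpotent of class exactly c. -/

import Mathlib

section Aux

variable (E L K : Type) [Field E] [CharZero E]
    [LieRing L] [LieAlgebra ℚ L]
    [LieRing K] [LieAlgebra E K] [LieAlgebra ℚ K] [IsScalarTower ℚ E K]
    (ι : L →ₗ⁅ℚ⁆ K)

/-- `ι` maps the `k`-th lower central series of `L` into that of `K`. -/
lemma aux_map_lcs (k : ℕ) :
    ∀ x ∈ LieModule.lowerCentralSeries ℚ L L k,
      ι x ∈ LieModule.lowerCentralSeries E K K k := by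
  induction k with
  | zero => intro x _; simp
  | succ k ih =>
    intro x hx
    rw [LieModule.lowerCentralSeries_succ] at hx
    rw [← LieSubmodule.mem_toSubmodule, LieSubmodule.lieIdeal_oper_eq_linear_span'] at hx
    induction hx using Submodule.span_induction with
    | mem m hm =>
      obtain ⟨y, -, n, hn, rfl⟩ := hm
      rw [LieHom.map_lie]
      rw [LieModule.lowerCentralSeries_succ]
      exact LieSubmodule.lie_mem_lie (LieSubmodule.mem_top _) (ih n hn)
    | zero => simp
    | add a b _ _ ha hb => rw [map_add]; exact add_mem ha hb
    | smul q a _ ha =>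
      rw [map_smul]
      have : (q : ℚ) • ι a = (algebraMap ℚ E q) • ι a := algebraMap_smul E q (ι a) |>.symm
      rw [this]
      exact Submodule.smul_mem _ _ ha

lemma aux_lcs_le (hspan : Submodule.span E (Set.range ι) = ⊤) (k : ℕ) :
    ∀ x ∈ LieModule.lowerCentralSeries E K K k,
      x ∈ Submodule.span E (ι '' (LieModule.lowerCentralSeries ℚ L L k : Set L)) := by
  induction k with
  | zero =>
    intro x _
    rw [show (ι '' ((LieModule.lowerCentralSeries ℚ L L 0 : LieIdeal ℚ L) : Set L)) = Set.range ι by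
      simp [LieModule.lowerCentralSeries_zero, Set.image_univ], hspan]
    trivial
  | succ k ih =>
    intro x hx
    rw [LieModule.lowerCentralSeries_succ] at hx
    rw [← LieSubmodule.mem_toSubmodule, LieSubmodule.lieIdeal_oper_eq_linear_span'] at hx
    induction hx using Submodule.span_induction with
    | mem m hm =>
      obtain ⟨y, -, n, hn, rfl⟩ := hm
      have hy : y ∈ Submodule.span E (Set.range ι) := by rw [hspan]; trivial
      have hn' := ih n hn
      clear hn
      induction hy using Submodule.span_induction with
      | mem z hz =>
        obtain ⟨a, rfl⟩ := hz
        induction hn' using Submodule.span_induction with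
        | mem w hw =>
          obtain ⟨b, hb, rfl⟩ := hw
          rw [← LieHom.map_lie]
          apply Submodule.subset_span
          refine ⟨⁅a, b⁆, ?_, rfl⟩
          rw [SetLike.mem_coe, LieModule.lowerCentralSeries_succ]
          exact LieSubmodule.lie_mem_lie (LieSubmodule.mem_top _) hb
        | zero => simp
        | add u v _ _ hu hv => rw [lie_add]; exact add_mem hu hv
        | smul e u _ hu => rw [lie_smul]; exact Submodule.smul_mem _ _ hu
      | zero => simp
      | add u v _ _ hu hv => rw [add_lie]; exact add_mem hu hv
      | smul e u _ hu => rw [smul_lie]; exact Submodule.smul_mem _ _ hu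
    | zero => simp
    | add u v _ _ hu hv => exact add_mem hu hv
    | smul e u _ hu => exact Submodule.smul_mem _ _ hu

end Aux

theorem completion_nilpotent_same_class
    (E L K : Type) [Field E] [CharZero E]
    [LieRing L] [LieAlgebra ℚ L]
    [LieRing K] [LieAlgebra E K] [LieAlgebra ℚ K] [IsScalarTower ℚ E K]
    (ι : L →ₗ⁅ℚ⁆ K) (hinj : Function.Injective ι)
    (hspan : Submodule.span E (Set.range ι) = ⊤)
    (c : ℕ)
    (hc : LieModule.lowerCentralSeries ℚ L L c = ⊥)
    (hc' : ∀ b < c, LieModule.lowerCentralSeries ℚ L L b ≠ ⊥) :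
    LieModule.lowerCentralSeries E K K c = ⊥ ∧
      ∀ b < c, LieModule.lowerCentralSeries E K K b ≠ ⊥ := by
  constructor
  · rw [LieSubmodule.eq_bot_iff]
    intro m hm
    have h := aux_lcs_le E L K ι hspan c m hm
    rw [hc] at h
    simpa using h
  · intro b hb hbot
    apply hc' b hb
    rw [LieSubmodule.eq_bot_iff]
    intro x hx
    have := aux_map_lcs E L K ι b x hx
    rw [hbot] at this
    have : ι x = 0 := by simpa using this
    exact hinj (by simpa using this)
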